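/- Let u : ℝ → ℝ be twice continuously differentiable and let x ∈ ℝ. Then (2/δ²)·∫_{x−δ}^{x+δ} (u(y) − u(x))/|y − x| dy tends to u''(x) as δ → 0⁺. Equivalently, the nonlocal Laplacian L_δ u(x) = 2·∫_ℝ γ_{1,r}(x,y)·(u(y) − u(x)) dy with rational one-dimensional kernel γ_{1,r}(x,y) = 1/(δ²·|y − x|) for |y − x| ≤ δ and 0 otherwise converges to the local Laplacian u''(x) in the limit of vanishing horizon. -/

import Mathlib

open MeasureTheory Filter

/-- The one-dimensional nonlocal Laplacian with rational kernel
`γ₁r(x,y) = 1/(δ²·|y−x|)` for `|y−x| ≤ δ` (and `0` otherwise) converges, as the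
horizon `δ → 0⁺`, to the local Laplacian `u''(x)` for every `C²` function `u`. -/
theorem nonlocal_laplacian_rational_kernel_1d_limit
    (u : ℝ → ℝ) (hu : ContDiff ℝ 2 u) (x : ℝ) :
    Tendsto (fun δ : ℝ => (2 / δ ^ 2) * ∫ y in (x - δ)..(x + δ), (u y - u x) / |y - x|)
      (nhdsWithin 0 (Set.Ioi 0)) (nhds (deriv (deriv u) x)) ∧
    Tendsto (fun δ : ℝ =>
        2 * ∫ y : ℝ, (if |y - x| ≤ δ then 1 / (δ ^ 2 * |y - x|) else 0) * (u y - u x))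
      (nhdsWithin 0 (Set.Ioi 0)) (nhds (deriv (deriv u) x)) := by
  set c := deriv (deriv u) x with hc
  -- basic differentiability facts
  have hu' : Differentiable ℝ u ∧ ContDiff ℝ 1 (deriv u) := by
    have key := contDiff_succ_iff_deriv (𝕜 := ℝ) (n := 1) (f := u)
    rw [show (1 : WithTop ℕ∞) + 1 = 2 by norm_num] at key
    have := key.mp hu
    exact ⟨this.1, this.2.2⟩
  have hud : Differentiable ℝ u := hu'.1
  have hderiv_cont : Continuous (deriv u) := hu'.2.continuous
  have hderiv_diff : HasDerivAt (deriv u) c x := by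
    have : Differentiable ℝ (deriv u) := hu'.2.differentiable one_ne_zero
    exact (this x).hasDerivAt
  have hucont : Continuous u := hud.continuous
  -- Step A: symmetric difference quotient of deriv u
  have hmap_pos : Tendsto (fun δ : ℝ => x + δ) (nhdsWithin 0 (Set.Ioi 0)) (nhdsWithin x {x}ᶜ) := by
    apply tendsto_nhdsWithin_of_tendsto_nhds_of_eventually_within
    · have : Tendsto (fun δ : ℝ => x + δ) (nhds 0) (nhds (x + 0)) :=
        (continuous_const.add continuous_id).tendsto 0
      rw [add_zero] at this
      exact this.mono_left nhdsWithin_le_nhds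
    · filter_upwards [self_mem_nhdsWithin] with δ (hδ : 0 < δ)
      simp [hδ.ne']
  have hmap_neg : Tendsto (fun δ : ℝ => x - δ) (nhdsWithin 0 (Set.Ioi 0)) (nhdsWithin x {x}ᶜ) := by
    apply tendsto_nhdsWithin_of_tendsto_nhds_of_eventually_within
    · have : Tendsto (fun δ : ℝ => x - δ) (nhds 0) (nhds (x - 0)) :=
        (continuous_const.sub continuous_id).tendsto 0
      rw [sub_zero] at this
      exact this.mono_left nhdsWithin_le_nhds
    · filter_upwards [self_mem_nhdsWithin] with δ (hδ : 0 < δ)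
      simp [sub_ne_zero, hδ.ne']
  have hslope := hasDerivAt_iff_tendsto_slope.mp hderiv_diff
  have hA : Tendsto (fun δ : ℝ => (deriv u (x + δ) - deriv u (x - δ)) / (2 * δ))
      (nhdsWithin 0 (Set.Ioi 0)) (nhds c) := by
    have h1 := hslope.comp hmap_pos
    have h2 := hslope.comp hmap_neg
    have h3 : Tendsto (fun δ : ℝ => (slope (deriv u) x (x + δ) + slope (deriv u) x (x - δ)) / 2)
        (nhdsWithin 0 (Set.Ioi 0)) (nhds ((c + c) / 2)) := (h1.add h2).div_const 2
    have hcc : (c + c) / 2 = c := by ring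
    rw [hcc] at h3
    refine h3.congr' ?_
    filter_upwards [self_mem_nhdsWithin] with δ (hδ : 0 < δ)
    simp only [slope_def_field]
    have hδ' : δ ≠ 0 := hδ.ne'
    rw [show x + δ - x = δ by ring, show x - δ - x = -δ by ring, div_neg, ← neg_div,
      ← add_div, div_div, mul_comm δ 2]
    congr 1
    ring
  -- Step B: second symmetric difference quotient of u
  have hB : Tendsto (fun δ : ℝ => (u (x + δ) + u (x - δ) - 2 * u x) / δ ^ 2)
      (nhdsWithin 0 (Set.Ioi 0)) (nhds c) := by
    apply HasDerivAt.lhopital_zero_nhdsGT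
      (f' := fun δ => deriv u (x + δ) - deriv u (x - δ)) (g' := fun δ => 2 * δ)
    · filter_upwards with δ
      have h1 : HasDerivAt (fun δ : ℝ => u (x + δ)) (deriv u (x + δ)) δ := by
        have := ((hud (x + δ)).hasDerivAt).comp δ
          ((hasDerivAt_id δ).const_add x)
        simpa [Function.comp_def] using this
      have h2 : HasDerivAt (fun δ : ℝ => u (x - δ)) (-deriv u (x - δ)) δ := by
        have := ((hud (x - δ)).hasDerivAt).comp δ
          ((hasDerivAt_id δ).const_sub x)
        simpa [Function.comp_def] using this
      simpa [← sub_eq_add_neg] using (h1.add h2).sub_const (2 * u x)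
    · filter_upwards with δ
      simpa using (hasDerivAt_pow 2 δ)
    · filter_upwards [self_mem_nhdsWithin] with δ (hδ : 0 < δ)
      positivity
    · have hcts : Continuous (fun δ : ℝ => u (x + δ) + u (x - δ) - 2 * u x) := by
        fun_prop
      have : Tendsto (fun δ : ℝ => u (x + δ) + u (x - δ) - 2 * u x) (nhds 0)
          (nhds (u (x + 0) + u (x - 0) - 2 * u x)) := hcts.tendsto 0
      simp only [add_zero, sub_zero] at this
      have h0 : u x + u x - 2 * u x = 0 := by ring
      rw [h0] at this
      exact this.mono_left nhdsWithin_le_nhds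
    · have : Tendsto (fun δ : ℝ => δ ^ 2) (nhds 0) (nhds ((0:ℝ) ^ 2)) :=
        (continuous_pow 2).tendsto 0
      simpa using this.mono_left nhdsWithin_le_nhds
    · exact hA
  -- the symmetrized integrand
  set h : ℝ → ℝ := fun s => (u (x + s) + u (x - s) - 2 * u x) / s with hh
  have hφ0 : HasDerivAt (fun s : ℝ => u (x + s) + u (x - s) - 2 * u x) 0 0 := by
    have h1 : HasDerivAt (fun δ : ℝ => u (x + δ)) (deriv u (x + 0)) 0 := by
      have := ((hud (x + 0)).hasDerivAt).comp 0 ((hasDerivAt_id 0).const_add x)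
      simpa [Function.comp_def] using this
    have h2 : HasDerivAt (fun δ : ℝ => u (x - δ)) (-deriv u (x - 0)) 0 := by
      have := ((hud (x - 0)).hasDerivAt).comp 0 ((hasDerivAt_id 0).const_sub x)
      simpa [Function.comp_def] using this
    have := (h1.add h2).sub_const (2 * u x)
    simpa using this
  have hhcont : Continuous h := by
    rw [continuous_iff_continuousAt]
    intro s
    rcases eq_or_ne s 0 with rfl | hs
    · -- continuity at 0
      have hsl := hasDerivAt_iff_tendsto_slope.mp hφ0
      have hval : h 0 = 0 := by simp [hh]
      have hcw : ContinuousWithinAt h {(0:ℝ)}ᶜ 0 := by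
        unfold ContinuousWithinAt
        rw [hval]
        refine hsl.congr' ?_
        filter_upwards with s
        simp only [slope_def_field, hh, add_zero, sub_zero]
        congr 1
        ring
      exact continuousWithinAt_compl_self.mp hcw
    · have : ContinuousAt (fun t : ℝ => (u (x + t) + u (x - t) - 2 * u x) / t) s := by
        apply ContinuousAt.div
        · fun_prop
        · fun_prop
        · exact hs
      exact this
  -- the primitive F
  set F : ℝ → ℝ := fun δ => ∫ s in (0:ℝ)..δ, h s with hF
  have hFderiv : ∀ δ : ℝ, HasDerivAt F (h δ) δ := by
    intro δ
    exact intervalIntegral.integral_hasDerivAt_right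
      (hhcont.intervalIntegrable _ _)
      (hhcont.stronglyMeasurableAtFilter _ _)
      hhcont.continuousAt
  -- Step C: L'Hôpital for F / δ²
  have hC : Tendsto (fun δ : ℝ => F δ / δ ^ 2) (nhdsWithin 0 (Set.Ioi 0)) (nhds (c / 2)) := by
    apply HasDerivAt.lhopital_zero_nhdsGT (f' := h) (g' := fun δ => 2 * δ)
    · filter_upwards with δ; exact hFderiv δ
    · filter_upwards with δ; simpa using (hasDerivAt_pow 2 δ)
    · filter_upwards [self_mem_nhdsWithin] with δ (hδ : 0 < δ); positivity
    · have hF0 : F 0 = 0 := by simp [hF]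
      have := ((hFderiv 0).continuousAt).tendsto
      rw [hF0] at this
      exact this.mono_left nhdsWithin_le_nhds
    · have : Tendsto (fun δ : ℝ => δ ^ 2) (nhds 0) (nhds ((0:ℝ) ^ 2)) :=
        (continuous_pow 2).tendsto 0
      simpa using this.mono_left nhdsWithin_le_nhds
    · -- h δ / (2δ) = (1/2) * (φ δ / δ²) → c/2
      have := hB.div_const 2
      refine this.congr' ?_
      filter_upwards [self_mem_nhdsWithin] with δ (hδ : 0 < δ)
      have hδ' : δ ≠ 0 := hδ.ne'
      simp only [hh, div_div]
      congr 1
      ring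
  -- Step D: the interval integral equals F δ for δ > 0
  have hD : ∀ δ : ℝ, 0 < δ →
      (∫ y in (x - δ)..(x + δ), (u y - u x) / |y - x|) = F δ := by
    intro δ hδ
    -- substitute y = x + s
    have hsub : (∫ s in (-δ)..δ, (u (x + s) - u x) / |s|)
        = ∫ y in (x - δ)..(x + δ), (u y - u x) / |y - x| := by
      have h1 : (∫ s in (-δ)..δ, (u (x + s) - u x) / |s|)
          = ∫ s in (-δ)..δ, (fun y => (u y - u x) / |y - x|) (x + s) := by
        apply intervalIntegral.integral_congr
        intro s _
        simp [add_sub_cancel_left]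
      rw [h1, intervalIntegral.integral_comp_add_left (fun y => (u y - u x) / |y - x|) x,
        show x + -δ = x - δ by ring]
    rw [← hsub]
    set k : ℝ → ℝ := fun s => (u (x + s) - u x) / |s| with hk
    -- integrability of k on [-δ, δ]
    obtain ⟨C, hC⟩ : ∃ C, ∀ y ∈ Set.Icc (x - δ) (x + δ), ‖deriv u y‖ ≤ C := by
      obtain ⟨C, hC⟩ := (isCompact_Icc (a := x - δ) (b := x + δ)).exists_bound_of_continuousOn
        hderiv_cont.continuousOn
      exact ⟨C, hC⟩
    have hbound : ∀ s ∈ Set.Icc (-δ) δ, ‖k s‖ ≤ C := by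
      intro s hs
      have hxs : x + s ∈ Set.Icc (x - δ) (x + δ) := by
        constructor <;> [linarith [hs.1]; linarith [hs.2]]
      have hxx : x ∈ Set.Icc (x - δ) (x + δ) := by
        constructor <;> linarith [hδ.le]
      have hmvt : ‖u (x + s) - u x‖ ≤ C * ‖(x + s) - x‖ := by
        exact (convex_Icc (x - δ) (x + δ)).norm_image_sub_le_of_norm_deriv_le
          (fun y _ => hud y) hC hxx hxs
      rcases eq_or_ne s 0 with rfl | hs0
      · have : (0:ℝ) ≤ C := le_trans (norm_nonneg _) (hC x hxx)
        simp [hk, this]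
      · have habs : |s| ≠ 0 := abs_ne_zero.mpr hs0
        rw [hk]
        simp only [norm_div, Real.norm_eq_abs, abs_abs]
        rw [div_le_iff₀ (abs_pos.mpr hs0)]
        have : ‖(x + s) - x‖ = |s| := by simp [Real.norm_eq_abs]
        calc |u (x + s) - u x| = ‖u (x + s) - u x‖ := rfl
          _ ≤ C * ‖(x + s) - x‖ := hmvt
          _ = C * |s| := by rw [this]
    have hkmeas : Measurable k := by
      apply Measurable.div
      · fun_prop
      · fun_prop
    have hkint : ∀ a b : ℝ, a ∈ Set.Icc (-δ) δ → b ∈ Set.Icc (-δ) δ →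
        IntervalIntegrable k volume a b := by
      intro a b ha hb
      rw [intervalIntegrable_iff]
      apply Measure.integrableOn_of_bounded (M := C)
      · exact ne_of_lt (lt_of_le_of_lt (measure_mono Set.uIoc_subset_uIcc)
          (by exact (isCompact_uIcc).measure_lt_top))
      · exact hkmeas.aestronglyMeasurable
      · rw [ae_restrict_iff' measurableSet_uIoc]
        filter_upwards with s hs
        apply hbound
        have := Set.uIoc_subset_uIcc hs
        rcases Set.mem_uIcc.mp this with ⟨h1, h2⟩ | ⟨h1, h2⟩
        · constructor
          · exact le_trans ha.1 h1
          · exact le_trans h2 hb.2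
        · constructor
          · exact le_trans hb.1 h1
          · exact le_trans h2 ha.2
    have hmem0 : (0:ℝ) ∈ Set.Icc (-δ) δ := by constructor <;> linarith [hδ.le]
    have hmemn : (-δ) ∈ Set.Icc (-δ) δ := by constructor <;> linarith [hδ.le]
    have hmemp : δ ∈ Set.Icc (-δ) δ := by constructor <;> linarith [hδ.le]
    have hsplit : (∫ s in (-δ)..δ, k s) = (∫ s in (-δ)..(0:ℝ), k s) + ∫ s in (0:ℝ)..δ, k s :=
      (intervalIntegral.integral_add_adjacent_intervals
        (hkint _ _ hmemn hmem0) (hkint _ _ hmem0 hmemp)).symm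
    have hneg : (∫ s in (-δ)..(0:ℝ), k s) = ∫ s in (0:ℝ)..δ, k (-s) := by
      rw [intervalIntegral.integral_comp_neg k]
      norm_num
    have hknegint : IntervalIntegrable (fun s => k (-s)) volume 0 δ := by
      have := (IntervalIntegrable.iff_comp_neg).mp (hkint (-δ) 0 hmemn hmem0)
      simp only [neg_neg, neg_zero] at this
      exact this.symm
    rw [hsplit, hneg, ← intervalIntegral.integral_add hknegint (hkint _ _ hmem0 hmemp)]
    -- now identify with F δ via congruence on Ioc 0 δ
    have hFδ : F δ = ∫ s in Set.Ioc 0 δ, h s := by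
      rw [hF]; exact intervalIntegral.integral_of_le hδ.le
    rw [hFδ, intervalIntegral.integral_of_le hδ.le]
    apply setIntegral_congr_fun measurableSet_Ioc
    intro s hs
    have hs0 : 0 < s := hs.1
    simp only [hk, hh]
    rw [abs_neg, abs_of_pos hs0, show x + -s = x - s by ring, ← add_div]
    congr 1
    ring
  -- conclude first statement
  have first : Tendsto (fun δ : ℝ => (2 / δ ^ 2) * ∫ y in (x - δ)..(x + δ), (u y - u x) / |y - x|)
      (nhdsWithin 0 (Set.Ioi 0)) (nhds c) := by
    have h2 : Tendsto (fun δ : ℝ => 2 * (F δ / δ ^ 2)) (nhdsWithin 0 (Set.Ioi 0))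
        (nhds (2 * (c / 2))) := hC.const_mul 2
    have hcc : 2 * (c / 2) = c := by ring
    rw [hcc] at h2
    refine h2.congr' ?_
    filter_upwards [self_mem_nhdsWithin] with δ (hδ : 0 < δ)
    rw [hD δ hδ]
    ring
  refine ⟨first, ?_⟩
  -- Step E: rewrite the full-space integral as the interval integral
  have hE : ∀ δ : ℝ, 0 < δ →
      (∫ y : ℝ, (if |y - x| ≤ δ then 1 / (δ ^ 2 * |y - x|) else 0) * (u y - u x))
        = (1 / δ ^ 2) * ∫ y in (x - δ)..(x + δ), (u y - u x) / |y - x| := by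
    intro δ hδ
    have hind : (fun y : ℝ => (if |y - x| ≤ δ then 1 / (δ ^ 2 * |y - x|) else 0) * (u y - u x))
        = Set.indicator (Set.Icc (x - δ) (x + δ))
            (fun y => (1 / δ ^ 2) * ((u y - u x) / |y - x|)) := by
      funext y
      by_cases hy : |y - x| ≤ δ
      · have hmem : y ∈ Set.Icc (x - δ) (x + δ) := by
          rw [Set.mem_Icc]
          have := abs_le.mp hy
          constructor <;> linarith [this.1, this.2]
        rw [Set.indicator_of_mem hmem, if_pos hy]
        rw [div_eq_mul_inv, mul_inv, one_mul]
        rw [div_eq_mul_inv]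
        ring
      · have hmem : y ∉ Set.Icc (x - δ) (x + δ) := by
          rw [Set.mem_Icc]
          intro ⟨h1, h2⟩
          exact hy (abs_le.mpr ⟨by linarith, by linarith⟩)
        rw [Set.indicator_of_notMem hmem, if_neg hy, zero_mul]
    rw [hind, integral_indicator measurableSet_Icc, integral_Icc_eq_integral_Ioc,
      ← intervalIntegral.integral_of_le (by linarith), intervalIntegral.integral_const_mul]
  -- conclude second statement
  have h2 : Tendsto (fun δ : ℝ => 2 * ((1 / δ ^ 2) *
      ∫ y in (x - δ)..(x + δ), (u y - u x) / |y - x|)) (nhdsWithin 0 (Set.Ioi 0)) (nhds c) := by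
    refine first.congr' ?_
    filter_upwards [self_mem_nhdsWithin] with δ (hδ : 0 < δ)
    ring
  refine h2.congr' ?_
  filter_upwards [self_mem_nhdsWithin] with δ (hδ : 0 < δ)
  rw [hE δ hδ]
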